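/- Let γ ≥ 1 be a real number, α a type, and w : α → ℝ a function with w(e) ≥ 0 for all e. Let E₁,…,E_m be finite subsets of α, and define M₀ = ∅ and M_i = M_{i−1} Δ E_i (symmetric difference) for 1 ≤ i ≤ m. Then Σ_{i=1}^{m} ( γ·Σ_{e ∈ E_i \ M_{i−1}} w(e) − Σ_{e ∈ E_i ∩ M_{i−1}} w(e) ) ≥ ((γ−1)/2) · Σ_{i=1}^{m} Σ_{e ∈ E_i} w(e). -/

import Mathlib

open Finset

/-- The amortized charging inequality (Eq. DPiub) behind Lemma 3.1: the total
γ-net-cost of the augmentations is at least ((γ-1)/2) times the total weight of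
all edges of all augmenting paths, where `M i` is the matching (edge set) after
the first `i` augmentations (symmetric differences). -/
theorem amortized_charging {α : Type*} [DecidableEq α] (γ : ℝ) (hγ : 1 ≤ γ)
    (w : α → ℝ) (hw : ∀ e, 0 ≤ w e)
    (m : ℕ) (E : ℕ → Finset α) (M : ℕ → Finset α)
    (hM0 : M 0 = ∅)
    (hM : ∀ i < m, M (i + 1) = (M i \ E i) ∪ (E i \ M i)) :
    ((γ - 1) / 2) * ∑ i ∈ range m, ∑ e ∈ E i, w e
      ≤ ∑ i ∈ range m,
          (γ * ∑ e ∈ E i \ M i, w e - ∑ e ∈ E i ∩ M i, w e) := by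
  have key : ∀ i < m,
      (∑ e ∈ E i \ M i, w e) - (∑ e ∈ E i ∩ M i, w e)
        = (∑ e ∈ M (i+1), w e) - (∑ e ∈ M i, w e) := by
    intro i hi
    rw [hM i hi, Finset.sum_union (disjoint_sdiff_sdiff)]
    have h1 : ∑ e ∈ M i \ E i, w e
        = (∑ e ∈ M i, w e) - (∑ e ∈ M i ∩ E i, w e) := by
      have : M i \ E i = M i \ (M i ∩ E i) := by
        simp [Finset.sdiff_inter_self_left]
      rw [this, Finset.sum_sdiff_eq_sub (Finset.inter_subset_left)]
    rw [h1, Finset.inter_comm (E i) (M i)]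
    ring
  have split : ∀ i ∈ range m,
      γ * ∑ e ∈ E i \ M i, w e - ∑ e ∈ E i ∩ M i, w e
        = ((γ - 1) / 2) * ((∑ e ∈ E i \ M i, w e) + (∑ e ∈ E i ∩ M i, w e))
          + ((γ + 1) / 2) * ((∑ e ∈ M (i+1), w e) - (∑ e ∈ M i, w e)) := by
    intro i hi
    rw [← key i (mem_range.mp hi)]
    ring
  rw [Finset.sum_congr rfl split, Finset.sum_add_distrib, ← Finset.mul_sum,
    ← Finset.mul_sum, Finset.sum_range_sub (fun i => ∑ e ∈ M i, w e), hM0]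
  have hE : ∀ i ∈ range m,
      ∑ e ∈ E i, w e = (∑ e ∈ E i \ M i, w e) + (∑ e ∈ E i ∩ M i, w e) := by
    intro i _
    rw [← Finset.sum_inter_add_sum_sdiff (E i) (M i) w, add_comm]
  rw [Finset.sum_congr rfl hE]
  simp only [Finset.sum_empty, sub_zero]
  have h1 : 0 ≤ ((γ + 1) / 2) * ∑ e ∈ M m, w e := by
    apply mul_nonneg (by linarith) (Finset.sum_nonneg fun e _ => hw e)
  linarith
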